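/- Let p > 3 be a prime and 0 ≤ d < p. If d is even, then ∑_{k=0}^{p-1} T(k,d) ≡ (-1)^{(p+d-1)/2} (mod p), and if d is odd, then ∑_{k=0}^{p-1} T(k,d) ≡ 0 (mod p), where T(k,d) is the trinomial coefficient. -/

import Mathlib

/-- The trinomial coefficient `T n m`: the coefficient of `x^(n+m)` in `(1+x+x^2)^n`. -/
noncomputable def trinomial (n m : ℕ) : ℤ :=
  Polynomial.coeff ((1 + Polynomial.X + Polynomial.X ^ 2 : Polynomial ℤ) ^ n) (n + m)

section Aux
open Polynomial Finset

lemma choose_neg_one_pow (p : ℕ) (hp : p.Prime) :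
    ∀ j, j < p → (((p-1).choose j : ℕ) : ZMod p) = (-1 : ZMod p)^j := by
  intro j
  induction j with
  | zero => simp
  | succ n ih =>
    intro hn
    have h0 := ih (Nat.lt_of_succ_lt hn)
    have hps : p - 1 + 1 = p := Nat.succ_pred_eq_of_pos hp.pos
    have hpc := Nat.choose_succ_succ (p-1) n
    simp only [Nat.succ_eq_add_one] at hpc
    rw [hps] at hpc
    have hdvd : (p : ℕ) ∣ p.choose (n+1) := hp.dvd_choose_self (Nat.succ_ne_zero n) hn
    have hz : ((p.choose (n+1) : ℕ) : ZMod p) = 0 := by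
      exact_mod_cast (ZMod.natCast_eq_zero_iff _ _).mpr hdvd
    have hcast := congrArg (fun x : ℕ => (x : ZMod p)) hpc
    simp only [Nat.cast_add] at hcast
    rw [hz] at hcast
    have h2 : (((p-1).choose (n+1) : ℕ) : ZMod p) = -(((p-1).choose n : ℕ) : ZMod p) := by
      linear_combination -hcast
    rw [h2, h0, pow_succ]
    ring

lemma main_aux (p : ℕ) (hp : p.Prime) (hp3 : 3 < p) (d : ℕ) (hd : d < p) :
    (∑ k ∈ Finset.range p, (_root_.trinomial k d : ZMod p)) =
      if Even d then (-1 : ZMod p) ^ ((p + d - 1) / 2) else 0 := by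
  haveI : Fact p.Prime := ⟨hp⟩
  have hkey : (∑ k ∈ range p, (1+X+X^2 : (ZMod p)[X])^k * X^(p-1-k)) = (1+X^2)^(p-1) := by
    have hne : (1 + X^2 : (ZMod p)[X]) ≠ 0 := by
      intro h
      have := congrArg (fun q : (ZMod p)[X] => q.coeff 0) h
      simp at this
    apply mul_right_cancel₀ hne
    have hg := geom_sum₂_mul (1+X+X^2 : (ZMod p)[X]) X p
    have h1 : (1+X+X^2 : (ZMod p)[X]) - X = 1 + X^2 := by ring
    rw [h1] at hg
    rw [hg, ← pow_succ, Nat.sub_add_cancel hp.one_lt.le]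
    rw [add_pow_char, add_pow_char, add_pow_char, one_pow]
    ring
  have hc := congrArg (fun q : (ZMod p)[X] => q.coeff (p-1+d)) hkey
  simp only [finset_sum_coeff] at hc
  -- LHS terms
  have hL : ∀ k ∈ range p,
      ((1+X+X^2 : (ZMod p)[X])^k * X^(p-1-k)).coeff (p-1+d)
        = (_root_.trinomial k d : ZMod p) := by
    intro k hk
    rw [mem_range] at hk
    rw [Polynomial.coeff_mul_X_pow']
    have hle : p-1-k ≤ p-1+d := by omega
    rw [if_pos hle]
    have hidx : p-1+d-(p-1-k) = k + d := by omega
    rw [hidx]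
    unfold _root_.trinomial
    rw [show ((Polynomial.coeff ((1 + Polynomial.X + Polynomial.X ^ 2 : Polynomial ℤ) ^ k) (k + d) : ℤ) : ZMod p)
        = (Polynomial.map (Int.castRingHom (ZMod p)) ((1 + Polynomial.X + Polynomial.X ^ 2 : Polynomial ℤ) ^ k)).coeff (k+d) by
      rw [Polynomial.coeff_map]; simp]
    simp [Polynomial.map_pow]
  rw [Finset.sum_congr rfl hL] at hc
  rw [hc]
  have hR : ((1+X^2:(ZMod p)[X])^(p-1)).coeff (p-1+d)
      = ∑ k ∈ range ((p-1)+1),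
          if p-1+d = 2*((p-1)-k) then (((p-1).choose k : ℕ) : ZMod p) else 0 := by
    rw [add_pow, finset_sum_coeff]
    apply Finset.sum_congr rfl
    intro k _
    rw [one_pow, one_mul, ← pow_mul, ← Polynomial.C_eq_natCast, Polynomial.coeff_mul_C,
      Polynomial.coeff_X_pow, ite_mul, one_mul, zero_mul]
  have hpodd : Odd p := hp.odd_of_ne_two (by omega)
  obtain ⟨s, hs⟩ := hpodd
  by_cases hev : Even d
  · obtain ⟨t, ht⟩ := hev
    have hts : t ≤ s := by omega
    rw [hR, if_pos ⟨t, ht⟩]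
    have hcong : ∀ k ∈ range ((p-1)+1),
        (if p-1+d = 2*((p-1)-k) then (((p-1).choose k : ℕ) : ZMod p) else 0)
          = (if k = s-t then (((p-1).choose k : ℕ) : ZMod p) else 0) := by
      intro k hk
      rw [mem_range] at hk
      by_cases h : k = s - t
      · rw [if_pos (by omega), if_pos h]
      · rw [if_neg (by omega), if_neg h]
    rw [Finset.sum_congr rfl hcong, Finset.sum_ite_eq' (range ((p-1)+1)) (s-t)
      (fun k => (((p-1).choose k : ℕ) : ZMod p)), if_pos (by rw [mem_range]; omega)]
    rw [show s-t = (p-1)-(s+t) by omega, Nat.choose_symm (by omega : s+t ≤ p-1)]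
    rw [choose_neg_one_pow p hp (s+t) (by omega)]
    rw [show (p+d-1)/2 = s+t by omega]
  · rw [if_neg hev, hR]
    have hodd : Odd d := Nat.not_even_iff_odd.mp hev
    obtain ⟨t, ht⟩ := hodd
    apply Finset.sum_eq_zero
    intro k hk
    rw [mem_range] at hk
    rw [if_neg (by omega)]

end Aux

theorem stmt1 (p : ℕ) (hp : p.Prime) (hp3 : 3 < p) (d : ℕ) (hd : d < p) :
    (∑ k ∈ Finset.range p, (trinomial k d : ZMod p)) =
      if Even d then (-1 : ZMod p) ^ ((p + d - 1) / 2) else 0 := by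
  exact main_aux p hp hp3 d hd
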